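/- Let q = 2^m be a power of two and let k be an integer with 1 ≤ k ≤ 2^{m-1}. For any choice of 2k pairwise distinct code locators α = (α_1,…,α_{2k}) ∈ F_q^{2k}, there exist nonzero column multipliers v = (v_1,…,v_{2k}) ∈ F_q^{2k} such that the generalized Reed–Solomon code GRS_k(α,v) of length 2k and dimension k is self-dual, i.e., GRS_k(α,v)^⊥ = GRS_k(α,v). -/

import Mathlib

open Polynomial Matrix

/-- The generalized Reed–Solomon code `GRS_k(α, v)` of length `n` and dimension `k`,
with code locators `α` and column multipliers `v`: the set of words
`(v 1 * f(α 1), …, v n * f(α n))` for polynomials `f` of degree `< k`. -/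
noncomputable def GRS {F : Type} [Field F] {n : ℕ} (k : ℕ) (α v : Fin n → F) :
    Submodule F (Fin n → F) :=
  Submodule.map (LinearMap.pi fun i => v i • Polynomial.leval (α i))
    (Polynomial.degreeLT F k)

/-- The dual code with respect to the standard bilinear form `(c, x) ↦ ∑ i, c i * x i`. -/
def dualCode {F : Type} [Field F] {ι : Type} [Fintype ι] (C : Submodule F (ι → F)) :
    Submodule F (ι → F) where
  carrier := {x | ∀ c ∈ C, ∑ i, c i * x i = 0}
  add_mem' := by
    intro a b ha hb c hc
    simp only [Pi.add_apply, mul_add, Finset.sum_add_distrib, ha c hc, hb c hc, add_zero]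
  zero_mem' := by intro c hc; simp
  smul_mem' := by
    intro r x hx c hc
    simp only [Pi.smul_apply, smul_eq_mul, mul_left_comm, ← Finset.mul_sum, hx c hc, mul_zero]

/-- The star-product (componentwise/Schur product) code `C ⋆ D`:
the span of all componentwise products of a codeword of `C` with a codeword of `D`. -/
def starProd {F : Type} [Field F] {ι : Type} (C D : Submodule F (ι → F)) :
    Submodule F (ι → F) :=
  Submodule.span F {x | ∃ c ∈ C, ∃ d ∈ D, x = c * d}

/-- The Cartesian product code `C × C ⊆ F^{2n}`, realized on the index type `Fin n ⊕ Fin n`. -/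
def cartProd {F : Type} [Field F] {n : ℕ} (C : Submodule F (Fin n → F)) :
    Submodule F (Fin n ⊕ Fin n → F) where
  carrier := {x | (fun i => x (Sum.inl i)) ∈ C ∧ (fun i => x (Sum.inr i)) ∈ C}
  add_mem' := fun ha hb => ⟨C.add_mem ha.1 hb.1, C.add_mem ha.2 hb.2⟩
  zero_mem' := ⟨C.zero_mem, C.zero_mem⟩
  smul_mem' := fun r x hx => ⟨C.smul_mem r hx.1, C.smul_mem r hx.2⟩


open Polynomial Matrix Finset Lagrange

/-- Dot product bilinear form. -/
noncomputable def dotB (F : Type) [Field F] (ι : Type) [Fintype ι] :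
    LinearMap.BilinForm F (ι → F) :=
  LinearMap.mk₂ F (fun x y => ∑ i, x i * y i)
    (by intro x y z; simp [add_mul, Finset.sum_add_distrib])
    (by intro c x y; simp [Finset.mul_sum, mul_assoc])
    (by intro x y z; simp [mul_add, Finset.sum_add_distrib])
    (by intro c x y; simp [Finset.mul_sum, mul_left_comm])

lemma dotB_apply {F : Type} [Field F] {ι : Type} [Fintype ι] (x y : ι → F) :
    dotB F ι x y = ∑ i, x i * y i := rfl

lemma dotB_refl (F : Type) [Field F] (ι : Type) [Fintype ι] :
    (dotB F ι).IsRefl := by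
  intro x y h
  simpa [dotB_apply, mul_comm] using h

lemma dotB_nondeg (F : Type) [Field F] (ι : Type) [Fintype ι] [DecidableEq ι] :
    (dotB F ι).Nondegenerate := by
  refine (LinearMap.IsRefl.nondegenerate_iff_separatingLeft (dotB_refl F ι)).mpr ?_
  intro x hx
  funext i
  have := hx (Pi.single i 1)
  simpa [dotB_apply, Pi.single_apply, mul_ite, Finset.sum_ite_eq'] using this

/-- Key Lagrange identity. -/
lemma sum_nodalWeight_mul_eval {F : Type} [Field F] {ι : Type} [DecidableEq ι]
    {s : Finset ι} {v : ι → F} (hvs : Set.InjOn v s)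
    {f : Polynomial F} (hf : f.degree < s.card) :
    ∑ i ∈ s, nodalWeight s v i * f.eval (v i) = f.coeff (s.card - 1) := by
  conv_rhs => rw [Lagrange.eq_interpolate hvs hf]
  rw [interpolate_apply, finset_sum_coeff]
  refine Finset.sum_congr rfl fun i hi => ?_
  rw [coeff_C_mul, basis_eq_prod_sub_inv_mul_nodal_div hi, ← nodal_erase_eq_nodal_div hi,
    coeff_C_mul]
  have h2 : (nodal (s.erase i) v).natDegree = s.card - 1 := by
    rw [natDegree_nodal, card_erase_of_mem hi]
  have h1 : (nodal (s.erase i) v).coeff (s.card - 1) = 1 := by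
    rw [← h2]; exact (Lagrange.nodal_monic).coeff_natDegree
  rw [h1]; ring

theorem existsSelfDualGRS {F : Type} [Field F] [Fintype F] (m k : ℕ) (hm : 1 ≤ m)
    (hcard : Fintype.card F = 2 ^ m) (hk1 : 1 ≤ k) (hk2 : k ≤ 2 ^ (m - 1))
    (α : Fin (2 * k) → F) (hα : Function.Injective α) :
    ∃ v : Fin (2 * k) → F, (∀ i, v i ≠ 0) ∧ dualCode (GRS k α v) = GRS k α v := by
  classical
  -- characteristic 2
  have hp2 : ringChar F = 2 := by
    obtain ⟨n, hp, hc⟩ := FiniteField.card F (ringChar F)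
    have hdvd : ringChar F ∣ 2 ^ m := by
      rw [← hcard, hc]
      exact dvd_pow_self _ n.ne_zero
    exact (Nat.prime_dvd_prime_iff_eq hp Nat.prime_two).mp (hp.dvd_of_dvd_pow hdvd)
  -- nodal weights
  set w : Fin (2 * k) → F := fun i => nodalWeight Finset.univ α i with hw
  have hwne : ∀ i, w i ≠ 0 := fun i =>
    nodalWeight_ne_zero (hα.injOn) (Finset.mem_univ i)
  -- square roots
  have hsq : ∀ i, ∃ r : F, w i = r * r := fun i =>
    FiniteField.isSquare_of_char_two hp2 (w i)
  choose v hv using hsq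
  have hvne : ∀ i, v i ≠ 0 := by
    intro i h
    exact hwne i (by rw [hv i, h, mul_zero])
  refine ⟨v, hvne, ?_⟩
  -- the evaluation map
  set L : Polynomial F →ₗ[F] (Fin (2 * k) → F) :=
    LinearMap.pi fun i => v i • Polynomial.leval (α i) with hLdef
  have hL : ∀ (f : Polynomial F) i, L f i = v i * f.eval (α i) := by
    intro f i
    simp [hLdef, Polynomial.leval_apply]
  -- degree bound for products
  have bound : ∀ p q : Polynomial F, p ∈ degreeLT F k → q ∈ degreeLT F k →
      (p * q).degree < ((2 * k - 1 : ℕ) : WithBot ℕ) := by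
    intro p q hp hq
    rw [Polynomial.mem_degreeLT] at hp hq
    rcases eq_or_ne p 0 with rfl | hp0
    · simp only [zero_mul, Polynomial.degree_zero]
      exact_mod_cast WithBot.bot_lt_coe _
    rcases eq_or_ne q 0 with rfl | hq0
    · simp only [mul_zero, Polynomial.degree_zero]
      exact_mod_cast WithBot.bot_lt_coe _
    have h1 := (Polynomial.natDegree_lt_iff_degree_lt hp0).mpr (by exact_mod_cast hp)
    have h2 := (Polynomial.natDegree_lt_iff_degree_lt hq0).mpr (by exact_mod_cast hq)
    refine (Polynomial.natDegree_lt_iff_degree_lt (mul_ne_zero hp0 hq0)).mp ?_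
    calc (p * q).natDegree ≤ p.natDegree + q.natDegree := Polynomial.natDegree_mul_le
      _ < 2 * k - 1 := by omega
  -- key orthogonality
  have key : ∀ f ∈ degreeLT F k, ∀ g ∈ degreeLT F k,
      ∑ i, (L f i) * (L g i) = 0 := by
    intro f hf g hg
    have h1 : ∑ i, (L f i) * (L g i) = ∑ i, w i * (f * g).eval (α i) := by
      refine Finset.sum_congr rfl fun i _ => ?_
      rw [hL, hL, Polynomial.eval_mul, hv i]; ring
    have hcardu : ((Finset.univ : Finset (Fin (2 * k))).card) = 2 * k := by simp
    have hdeg : (f * g).degree < ((Finset.univ : Finset (Fin (2 * k))).card : WithBot ℕ) := by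
      rw [hcardu]
      exact lt_of_lt_of_le (bound f g hf hg) (by exact_mod_cast Nat.sub_le _ _)
    rw [h1, sum_nodalWeight_mul_eval hα.injOn hdeg, hcardu]
    exact Polynomial.coeff_eq_zero_of_degree_lt (bound f g hf hg)
  -- GRS ≤ dualCode
  have hle : GRS k α v ≤ dualCode (GRS k α v) := by
    intro x hx c hc
    obtain ⟨g, hg, rfl⟩ := hx
    obtain ⟨f, hf, rfl⟩ := hc
    exact key f hf g hg
  -- finrank of GRS
  haveI : FiniteDimensional F (degreeLT F k) :=
    LinearEquiv.finiteDimensional (Polynomial.degreeLTEquiv F k).symm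
  have hGRSrank : Module.finrank F (GRS k α v) = k := by
    have hinj : Function.Injective (L ∘ₗ (degreeLT F k).subtype) := by
      rw [← LinearMap.ker_eq_bot, LinearMap.ker_eq_bot']
      rintro ⟨f, hf⟩ hLf
      have hLf' : L f = 0 := hLf
      have hev : ∀ i, f.eval (α i) = 0 := by
        intro i
        have h0 : L f i = 0 := congrFun hLf' i
        rw [hL] at h0
        exact (mul_eq_zero.mp h0).resolve_left (hvne i)
      have hnd : f.natDegree < Fintype.card (Fin (2 * k)) := by
        rw [Fintype.card_fin]
        rcases eq_or_ne f 0 with rfl | hf0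
        · simp; omega
        · have := (Polynomial.natDegree_lt_iff_degree_lt hf0).mpr
            (by exact_mod_cast Polynomial.mem_degreeLT.mp hf)
          omega
      exact Subtype.ext (Polynomial.eq_zero_of_natDegree_lt_card_of_eval_eq_zero f hα hev hnd)
    have hrange : GRS k α v = LinearMap.range (L ∘ₗ (degreeLT F k).subtype) := by
      rw [LinearMap.range_comp, Submodule.range_subtype]; rfl
    rw [hrange, LinearMap.finrank_range_of_inj hinj,
      (Polynomial.degreeLTEquiv F k).finrank_eq, Module.finrank_fin_fun]
  -- dualCode equals orthogonal complement
  have horth : dualCode (GRS k α v) = (dotB F (Fin (2 * k))).orthogonal (GRS k α v) := by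
    ext x
    simp only [LinearMap.BilinForm.mem_orthogonal_iff, LinearMap.BilinForm.IsOrtho, dotB_apply]
    exact Iff.rfl
  have hdualrank : Module.finrank F (dualCode (GRS k α v)) = k := by
    rw [horth, LinearMap.BilinForm.finrank_orthogonal (dotB_nondeg F _),
      Module.finrank_fin_fun, hGRSrank]
    omega
  exact (Submodule.eq_of_le_of_finrank_le hle (by rw [hdualrank, hGRSrank])).symm
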